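/- The number of committees fixed by an element (σ; π) ∈ S_m ≀ S_n equals the product, over a set of representatives i of the orbits of π on Fin n, of the number of fixed points in Fin m of the cycle product g_{ν_i} = σ_i σ_{π⁻¹(i)} ⋯ σ_{π^{-ℓ_i+1}(i)}, where ℓ_i is the orbit size of i under π. -/

import Mathlib

/-- The cycle product `g_{ν_i} = σ_i σ_{π⁻¹(i)} ⋯ σ_{π^{-(ℓ-1)}(i)} ∈ S_m`. -/
def cycleProd {m n : ℕ} (σ : Fin n → Equiv.Perm (Fin m)) (π : Equiv.Perm (Fin n))
    (i : Fin n) (ℓ : ℕ) : Equiv.Perm (Fin m) :=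
  ((List.range ℓ).map fun t => σ ((π ^ t)⁻¹ i)).prod

namespace CommitteeAux

variable {m n : ℕ} (σ : Fin n → Equiv.Perm (Fin m)) (π : Equiv.Perm (Fin n))

/-- The orbit sequence starting at value `k` over the cycle of `j`. -/
def dSeq (j : Fin n) (k : Fin m) : ℕ → Fin m
  | 0 => k
  | t + 1 => σ ((π ^ (t + 1)) j) (dSeq j k t)

lemma dSeq_eq (j : Fin n) (k : Fin m) : ∀ t, dSeq σ π j k t = cycleProd σ π ((π ^ t) j) t k
  | 0 => by simp [dSeq, cycleProd]
  | t + 1 => by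
    have key : ∀ u : ℕ, (π ^ (u + 1))⁻¹ ((π ^ (t + 1)) j) = (π ^ u)⁻¹ ((π ^ t) j) := by
      intro u
      have h : (π ^ (u + 1))⁻¹ * π ^ (t + 1) = (π ^ u)⁻¹ * π ^ t := by group
      simpa [Equiv.Perm.mul_apply] using congrArg (fun g : Equiv.Perm (Fin n) => g j) h
    have hmap : ((List.range t).map fun u => σ ((π ^ (u + 1))⁻¹ ((π ^ (t + 1)) j))) =
        (List.range t).map fun u => σ ((π ^ u)⁻¹ ((π ^ t) j)) :=
      List.map_congr_left fun u _ => by rw [key]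
    show σ ((π ^ (t + 1)) j) (dSeq σ π j k t) = _
    rw [dSeq_eq j k t]
    unfold cycleProd
    rw [List.range_succ_eq_map, List.map_cons, List.map_map, List.prod_cons]
    have : ((List.range t).map ((fun u => σ ((π ^ u)⁻¹ ((π ^ (t + 1)) j))) ∘ (· + 1))) =
        (List.range t).map fun u => σ ((π ^ u)⁻¹ ((π ^ t) j)) := by
      rw [← hmap]; rfl
    rw [this]
    simp [Equiv.Perm.mul_apply]

lemma dSeq_period (j : Fin n) (k : Fin m)
    (hk : cycleProd σ π j (Function.minimalPeriod (⇑π) j) k = k) :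
    ∀ t, dSeq σ π j k (t + Function.minimalPeriod (⇑π) j) = dSeq σ π j k t := by
  set ℓ := Function.minimalPeriod (⇑π) j with hℓ
  have hfix : (π ^ ℓ) j = j := Function.iterate_minimalPeriod
  intro t
  induction t with
  | zero =>
    rw [Nat.zero_add]
    show dSeq σ π j k ℓ = k
    rw [dSeq_eq, hfix, hk]
  | succ t ih =>
    have harg : (π ^ (t + 1 + ℓ)) j = (π ^ (t + 1)) j := by
      rw [pow_add, Equiv.Perm.mul_apply, hfix]
    rw [show t + 1 + ℓ = (t + ℓ) + 1 by ring]
    show σ ((π ^ (t + ℓ + 1)) j) (dSeq σ π j k (t + ℓ)) = σ ((π ^ (t + 1)) j) (dSeq σ π j k t)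
    rw [show t + ℓ + 1 = t + 1 + ℓ by ring, harg, ih]

lemma dSeq_congr (j : Fin n) (k : Fin m)
    (hk : cycleProd σ π j (Function.minimalPeriod (⇑π) j) k = k)
    {a b : ℕ} (hab : (π ^ a) j = (π ^ b) j) : dSeq σ π j k a = dSeq σ π j k b := by
  -- reduce to the case a ≤ b
  wlog h : a ≤ b generalizing a b
  · exact (this hab.symm (le_of_not_ge h)).symm
  have hfix : (π ^ (b - a)) j = j := by
    have : (π ^ a) ((π ^ (b - a)) j) = (π ^ a) j := by
      rw [← Equiv.Perm.mul_apply, ← pow_add]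
      rw [show a + (b - a) = b from by omega, hab]
    exact (π ^ a).injective this
  have hdvd : Function.minimalPeriod (⇑π) j ∣ b - a :=
    Function.IsPeriodicPt.minimalPeriod_dvd (by exact hfix)
  obtain ⟨c, hc⟩ := hdvd
  rw [mul_comm] at hc
  have hb : b = a + c * Function.minimalPeriod (⇑π) j := by omega
  subst hb
  clear hab hfix hc h
  induction c with
  | zero => simp
  | succ c ih =>
    rw [show a + (c + 1) * Function.minimalPeriod (⇑π) j =
      (a + c * Function.minimalPeriod (⇑π) j) + Function.minimalPeriod (⇑π) j by ring,
      dSeq_period σ π j k hk, ih]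

lemma committee_dSeq (c : Fin n → Fin m) (hc : ∀ i, σ i (c (π⁻¹ i)) = c i) (j : Fin n) :
    ∀ t, c ((π ^ t) j) = dSeq σ π j (c j) t
  | 0 => by simp [dSeq]
  | t + 1 => by
    show c ((π ^ (t + 1)) j) = σ ((π ^ (t + 1)) j) (dSeq σ π j (c j) t)
    have harg : π⁻¹ ((π ^ (t + 1)) j) = (π ^ t) j := by
      have h : π⁻¹ * π ^ (t + 1) = π ^ t := by group
      simpa [Equiv.Perm.mul_apply] using congrArg (fun g : Equiv.Perm (Fin n) => g j) h
    rw [← committee_dSeq c hc j t, ← hc ((π ^ (t + 1)) j), harg]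

end CommitteeAux

/-- The number of committees fixed by `(σ; π) ∈ S_m ≀ S_n` equals the product,
over a set `s` of representatives of the orbits (cycles) of `π` on `Fin n`, of
the number of fixed points in `Fin m` of the cycle product `g_{ν_i}`, where
`ℓ_i` is the orbit size (minimal period) of `i` under `π`. -/
theorem card_fixed_committees_eq_prod {m n : ℕ}
    (σ : Fin n → Equiv.Perm (Fin m)) (π : Equiv.Perm (Fin n))
    (s : Finset (Fin n)) (hs : ∀ i : Fin n, ∃! j, j ∈ s ∧ π.SameCycle j i) :
    Fintype.card {c : Fin n → Fin m // ∀ i, σ i (c (π⁻¹ i)) = c i} =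
      ∏ j ∈ s,
        Fintype.card {k : Fin m // cycleProd σ π j (Function.minimalPeriod (⇑π) j) k = k} := by
  classical
  open CommitteeAux in
  -- choose representatives
  set R : Fin n → Fin n := fun i => (hs i).choose with hR
  have hR1 : ∀ i, R i ∈ s := fun i => (hs i).choose_spec.1.1
  have hR2 : ∀ i, π.SameCycle (R i) i := fun i => (hs i).choose_spec.1.2
  have hRuniq : ∀ i j, j ∈ s → π.SameCycle j i → j = R i := fun i j hj hsc =>
    (hs i).choose_spec.2 j ⟨hj, hsc⟩
  have hRs : ∀ j ∈ s, R j = j := fun j hj => (hRuniq j j hj (Equiv.Perm.SameCycle.refl π j)).symm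
  have hRinv : ∀ i, R (π⁻¹ i) = R i := by
    intro i
    refine hRuniq i (R (π⁻¹ i)) (hR1 _) ?_
    exact (hR2 (π⁻¹ i)).trans ⟨1, by simp⟩
  -- choose exponents
  have hTex : ∀ i, ∃ t : ℕ, (π ^ t) (R i) = i := by
    intro i
    obtain ⟨t, _, ht⟩ := (hR2 i).exists_pow_eq'
    exact ⟨t, ht⟩
  set T : Fin n → ℕ := fun i => (hTex i).choose with hT
  have hT1 : ∀ i, (π ^ T i) (R i) = i := fun i => (hTex i).choose_spec
  -- the equivalence
  let e : {c : Fin n → Fin m // ∀ i, σ i (c (π⁻¹ i)) = c i} ≃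
      Π j : s, {k : Fin m // cycleProd σ π j.1 (Function.minimalPeriod (⇑π) j.1) k = k} :=
    { toFun := fun c j => ⟨c.1 j.1, by
        have h1 := committee_dSeq σ π c.1 c.2 j.1 (Function.minimalPeriod (⇑π) j.1)
        rw [dSeq_eq] at h1
        have hfix : (π ^ Function.minimalPeriod (⇑π) j.1) j.1 = j.1 :=
          Function.iterate_minimalPeriod
        rw [hfix] at h1
        exact h1.symm⟩
      invFun := fun k => ⟨fun i => dSeq σ π (R i) (k ⟨R i, hR1 i⟩).1 (T i), by
        intro i
        have hji : R (π⁻¹ i) = R i := hRinv i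
        have hk := (k ⟨R i, hR1 i⟩).2
        have hpow : (π ^ (T (π⁻¹ i) + 1)) (R i) = (π ^ T i) (R i) := by
          rw [hT1 i, ← hji, pow_succ', Equiv.Perm.mul_apply, hT1 (π⁻¹ i),
            ← Equiv.Perm.mul_apply, mul_inv_cancel, Equiv.Perm.one_apply]
        have h2 : (⟨R (π⁻¹ i), hR1 (π⁻¹ i)⟩ : {x // x ∈ s}) = ⟨R i, hR1 i⟩ := Subtype.ext hji
        show σ i (dSeq σ π (R (π⁻¹ i)) (k ⟨R (π⁻¹ i), hR1 (π⁻¹ i)⟩).1 (T (π⁻¹ i))) =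
          dSeq σ π (R i) (k ⟨R i, hR1 i⟩).1 (T i)
        rw [h2, hji, ← dSeq_congr σ π (R i) (k ⟨R i, hR1 i⟩).1 hk hpow]
        show σ i (dSeq σ π (R i) (k ⟨R i, hR1 i⟩).1 (T (π⁻¹ i))) =
          σ ((π ^ (T (π⁻¹ i) + 1)) (R i)) (dSeq σ π (R i) (k ⟨R i, hR1 i⟩).1 (T (π⁻¹ i)))
        rw [hpow, hT1 i]⟩
      left_inv := fun c => by
        apply Subtype.ext
        funext i
        show dSeq σ π (R i) (c.1 (R i)) (T i) = c.1 i
        rw [← committee_dSeq σ π c.1 c.2 (R i) (T i), hT1 i]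
      right_inv := fun k => by
        funext j
        rcases j with ⟨j, hj⟩
        apply Subtype.ext
        show dSeq σ π (R j) (k ⟨R j, hR1 j⟩).1 (T j) = (k ⟨j, hj⟩).1
        have hRj : R j = j := hRs j hj
        have h2 : (⟨R j, hR1 j⟩ : {x // x ∈ s}) = ⟨j, hj⟩ := Subtype.ext hRj
        rw [h2, hRj]
        have hpow : (π ^ T j) j = (π ^ 0) j := by
          have := hT1 j; rw [hRj] at this; simpa using this
        rw [dSeq_congr σ π j _ (k ⟨j, hj⟩).2 hpow]
        rfl }
  rw [Fintype.card_congr e, Fintype.card_pi]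
  exact Finset.prod_coe_sort s fun j =>
    Fintype.card {k : Fin m // cycleProd σ π j (Function.minimalPeriod (⇑π) j) k = k}
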